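/- Let n, c, c', c'' , c_Y be positive integers. Let m : ℝ^{n×c} × ℝ^{n×c} × ℝ^{c_Y} → ℝ^{n×c''}, let φ map finite multisets of matrices in ℝ^{n×c''} to ℝ^{n×c''}, and let u : ℝ^{n×c} × ℝ^{n×c''} → ℝ^{n×c'}. Assume that for every n×n permutation matrix P and all inputs: m(P·U, P·U', y) = P·m(U, U', y); φ applied to the multiset obtained by left-multiplying every element of S by P equals P·φ(S); and u(P·U, P·U') = P·u(U, U'). Define the SMP layer f by f(U, Y, A)_i = u(U_i, φ({m(U_i, U_j, Y_{ij}) : v_j ∈ N_i})), where U = (U_1, …, U_n) with U_i ∈ ℝ^{n×c}, Y = (Y_{ij}) are edge features, and A is the adjacency matrix of a simple graph on n vertices determining the neighbor sets N_i. Then f is permutation equivariant: for every permutation π of {1,…,n}, defining U'_i[j,:] = U_{π(i)}[π(j),:], Y'_{ij} = Y_{π(i)π(j)} and A'[i,j] = A[π(i), π(j)], one has f(U', Y', A')_i[j,:] = f(U, Y, A)_{π(i)}[π(j),:] for all i, j. -/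

import Mathlib

open scoped Classical

/-- Row-permutation action of a permutation on a matrix: `(permRows π U)[i,:] = U[π i,:]`.
This is the action of (the transpose of) the permutation matrix of `π` on `U`. -/
def permRows {n c : ℕ} (π : Equiv.Perm (Fin n)) (U : Matrix (Fin n) (Fin c) ℝ) :
    Matrix (Fin n) (Fin c) ℝ :=
  U.submatrix π id

/-- One SMP layer: `f(U, Y, A)_i = u(U_i, φ({m(U_i, U_j, Y_{ij}) : v_j ∈ N_i}))`. -/
noncomputable def smpLayer {n c c' c'' cY : ℕ}
    (m : Matrix (Fin n) (Fin c) ℝ → Matrix (Fin n) (Fin c) ℝ → (Fin cY → ℝ) →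
      Matrix (Fin n) (Fin c'') ℝ)
    (φ : Multiset (Matrix (Fin n) (Fin c'') ℝ) → Matrix (Fin n) (Fin c'') ℝ)
    (u : Matrix (Fin n) (Fin c) ℝ → Matrix (Fin n) (Fin c'') ℝ →
      Matrix (Fin n) (Fin c') ℝ)
    (G : SimpleGraph (Fin n))
    (U : Fin n → Matrix (Fin n) (Fin c) ℝ)
    (Y : Fin n → Fin n → (Fin cY → ℝ)) (i : Fin n) :
    Matrix (Fin n) (Fin c') ℝ :=
  u (U i) (φ ((G.neighborFinset i).val.map (fun j => m (U i) (U j) (Y i j))))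

/-- Theorem 1 of the paper: if the message, aggregation and update
functions are permutation equivariant, then the SMP layer is permutation equivariant. -/
theorem smp_layer_equivariant
    (n c c' c'' cY : ℕ) (hn : 0 < n) (hc : 0 < c) (hc' : 0 < c') (hc'' : 0 < c'')
    (hcY : 0 < cY)
    (m : Matrix (Fin n) (Fin c) ℝ → Matrix (Fin n) (Fin c) ℝ → (Fin cY → ℝ) →
      Matrix (Fin n) (Fin c'') ℝ)
    (φ : Multiset (Matrix (Fin n) (Fin c'') ℝ) → Matrix (Fin n) (Fin c'') ℝ)
    (u : Matrix (Fin n) (Fin c) ℝ → Matrix (Fin n) (Fin c'') ℝ →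
      Matrix (Fin n) (Fin c') ℝ)
    (hm : ∀ (π : Equiv.Perm (Fin n)) (U U' : Matrix (Fin n) (Fin c) ℝ) (y : Fin cY → ℝ),
      m (permRows π U) (permRows π U') y = permRows π (m U U' y))
    (hφ : ∀ (π : Equiv.Perm (Fin n)) (S : Multiset (Matrix (Fin n) (Fin c'') ℝ)),
      φ (S.map (permRows π)) = permRows π (φ S))
    (hu : ∀ (π : Equiv.Perm (Fin n)) (U : Matrix (Fin n) (Fin c) ℝ)
      (U' : Matrix (Fin n) (Fin c'') ℝ),
      u (permRows π U) (permRows π U') = permRows π (u U U'))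
    (G : SimpleGraph (Fin n)) (U : Fin n → Matrix (Fin n) (Fin c) ℝ)
    (Y : Fin n → Fin n → (Fin cY → ℝ)) (π : Equiv.Perm (Fin n)) (i : Fin n) :
    smpLayer m φ u (G.comap ⇑π) (fun a => permRows π (U (π a)))
        (fun a b => Y (π a) (π b)) i
      = permRows π (smpLayer m φ u G U Y (π i)) := by
  have hN : (G.comap ⇑π).neighborFinset i = (G.neighborFinset (π i)).map π.symm.toEmbedding := by
    ext j
    simp [SimpleGraph.mem_neighborFinset, SimpleGraph.comap_adj, Equiv.symm_apply_eq, eq_comm]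
  have hms : Multiset.map
      (fun j => m (permRows π (U (π i))) (permRows π (U (π j))) (Y (π i) (π j)))
      ((G.comap ⇑π).neighborFinset i).val
      = Multiset.map (permRows π)
        (Multiset.map (fun j => m (U (π i)) (U j) (Y (π i) j)) (G.neighborFinset (π i)).val) := by
    rw [hN, Finset.map_val, Multiset.map_map, Multiset.map_map]
    apply Multiset.map_congr rfl
    intro j _
    simp [Function.comp, hm]
  unfold smpLayer
  rw [← hu, ← hφ]
  simp only []
  convert congrArg (fun S => u (permRows π (U (π i))) (φ S)) hms
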